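/- (A system with no solution that is greatest in both components.) Consider the system y1' = 3|y1|^{2/3}, y2' = −y1 with initial conditions y1(0) = 0, y2(0) = 0, where a solution on [0, ε] (ε > 0) is a pair of differentiable functions (φ1, φ2) : [0,ε] → ℝ² with φ1(0)=φ2(0)=0, φ1'(t) = 3|φ1(t)|^{2/3} and φ2'(t) = −φ1(t) for all t ∈ [0,ε]. Then for every ε > 0 there is NO solution (φ1, φ2) on [0,ε] such that every solution (ψ1, ψ2) on [0,ε] satisfies both ψ1(t) ≤ φ1(t) and ψ2(t) ≤ φ2(t) for all t ∈ [0,ε]. -/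

import Mathlib

open Set

/-- A solution of the system `y1' = 3|y1|^(2/3)`, `y2' = -y1`, `y1 0 = y2 0 = 0`
on `[0, ε]`. -/
def IsSolSys9 (ε : ℝ) (φ1 φ2 : ℝ → ℝ) : Prop :=
  φ1 0 = 0 ∧ φ2 0 = 0 ∧
    ∀ t ∈ Icc (0:ℝ) ε,
      HasDerivWithinAt φ1 (3 * |φ1 t| ^ ((2 : ℝ) / 3)) (Icc (0:ℝ) ε) t ∧
      HasDerivWithinAt φ2 (-(φ1 t)) (Icc (0:ℝ) ε) t

lemma zero_sol (ε : ℝ) : IsSolSys9 ε (fun _ => 0) (fun _ => 0) := by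
  refine ⟨rfl, rfl, fun t ht => ?_⟩
  have h0 : (3 : ℝ) * |(0:ℝ)| ^ ((2 : ℝ) / 3) = 0 := by
    rw [abs_zero, Real.zero_rpow (by norm_num)]; ring
  constructor
  · simpa [h0] using (hasDerivWithinAt_const t (Icc (0:ℝ) ε) (0:ℝ))
  · simpa using (hasDerivWithinAt_const t (Icc (0:ℝ) ε) (0:ℝ))

lemma cubic_sol (ε : ℝ) : IsSolSys9 ε (fun t => t ^ 3) (fun t => -(t ^ 4) / 4) := by
  refine ⟨by norm_num, by norm_num, fun t ht => ?_⟩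
  have ht0 : (0:ℝ) ≤ t := ht.1
  constructor
  · have h1 : HasDerivAt (fun t : ℝ => t ^ 3) (3 * t ^ 2) t := by
      simpa using (hasDerivAt_pow 3 t)
    have key : 3 * |t ^ 3| ^ ((2 : ℝ) / 3) = 3 * t ^ 2 := by
      rw [abs_of_nonneg (pow_nonneg ht0 3)]
      congr 1
      rw [← Real.rpow_natCast t 3, ← Real.rpow_mul ht0]
      norm_num
    rw [key]
    exact h1.hasDerivWithinAt
  · have h2 : HasDerivAt (fun t : ℝ => -(t ^ 4) / 4) (-(t ^ 3)) t := by
      have := ((hasDerivAt_pow 4 t).neg.div_const 4)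
      refine this.congr_deriv ?_
      push_cast
      ring
    exact h2.hasDerivWithinAt

theorem no_greatest_in_both_components :
    ∀ ε > (0:ℝ),
      ¬ ∃ φ1 φ2 : ℝ → ℝ, IsSolSys9 ε φ1 φ2 ∧
        ∀ ψ1 ψ2 : ℝ → ℝ, IsSolSys9 ε ψ1 ψ2 →
          ∀ t ∈ Icc (0:ℝ) ε, ψ1 t ≤ φ1 t ∧ ψ2 t ≤ φ2 t := by
  rintro ε hε ⟨φ1, φ2, hsol, hmax⟩
  have hεmem : ε ∈ Icc (0:ℝ) ε := ⟨le_of_lt hε, le_rfl⟩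
  -- φ2 ε ≥ 0 from zero solution
  have hφ2nn : (0:ℝ) ≤ φ2 ε := (hmax _ _ (zero_sol ε) ε hεmem).2
  -- φ1 t ≥ t^3 from cubic solution
  have hφ1 : ∀ t ∈ Icc (0:ℝ) ε, t ^ 3 ≤ φ1 t :=
    fun t ht => (hmax _ _ (cubic_sol ε) t ht).1
  -- h := g - φ2 with g t = -(t^4)/4 is monotone on Icc
  set h : ℝ → ℝ := fun t => -(t ^ 4) / 4 - φ2 t with hh
  have hmono : MonotoneOn h (Icc (0:ℝ) ε) := by
    apply monotoneOn_of_hasDerivWithinAt_nonneg (f' := fun t => φ1 t - t ^ 3)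
      (convex_Icc 0 ε)
    · apply ContinuousOn.sub
      · fun_prop
      · exact fun t ht => ((hsol.2.2 t ht).2).continuousWithinAt
    · intro x hx
      have hx' : x ∈ Icc (0:ℝ) ε := interior_subset hx
      have hg : HasDerivAt (fun t : ℝ => -(t ^ 4) / 4) (-(x ^ 3)) x := by
        have := ((hasDerivAt_pow 4 x).neg.div_const 4)
        refine this.congr_deriv ?_
        push_cast
        ring
      have := hg.hasDerivWithinAt.sub (((hsol.2.2 x hx').2).mono interior_subset)
      refine this.congr_deriv ?_
      ring
    · intro x hx
      have hx' : x ∈ Icc (0:ℝ) ε := interior_subset hx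
      linarith [hφ1 x hx']
  have h0 : h 0 = 0 := by simp [hh, hsol.2.1]
  have hle := hmono (left_mem_Icc.2 (le_of_lt hε)) hεmem (le_of_lt hε)
  rw [h0] at hle
  have : (0:ℝ) < ε ^ 4 := by positivity
  simp only [hh] at hle
  linarith
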